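/- Let 0 < δ ≤ 1, ε > 0, n ≥ 1 be such that δ·n/2 is a positive integer, and let q ≥ 2. Let C ⊆ (Fin n → Bool) be a nonempty code with relative distance at least δ, and let H be a (δ/2, ε)-test-hypergraph for C with a nonempty set E of hyperedges, each hyperedge of size at most q. Then the number of coordinates v ∈ Fin n contained in fewer than 2ε·|E|/(δ·n) hyperedges of H is strictly less than δ·n/2. -/

import Mathlib

open Finset Real MeasureTheory ProbabilityTheory

namespace LTCPaper

/-- A hyperedge over coordinates `Fin n`: a finite set `h` of coordinates together with a
constraint `f_h : (h → Bool) → Bool` on assignments to those coordinates. -/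
abbrev Edge (n : ℕ) := Σ h : Finset (Fin n), ({v // v ∈ h} → Bool) → Bool

/-- `x` satisfies the hyperedge `e` if the constraint accepts the restriction of `x` to it. -/
def sat {n : ℕ} (x : Fin n → Bool) (e : Edge n) : Prop :=
  e.2 (fun v => x v.1) = true

instance {n : ℕ} (x : Fin n → Bool) (e : Edge n) : Decidable (sat x e) :=
  inferInstanceAs (Decidable (_ = true))

/-- Relative Hamming distance: fraction of coordinates on which `x` and `y` differ. -/
noncomputable def relDist {n : ℕ} (x y : Fin n → Bool) : ℝ :=
  (hammingDist x y : ℝ) / n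

/-- `x` has relative distance at least `τ` from the code `C`. -/
def farFrom {n : ℕ} (C : Set (Fin n → Bool)) (x : Fin n → Bool) (τ : ℝ) : Prop :=
  ∀ y ∈ C, τ ≤ relDist x y

/-- `C` has relative distance at least `δ`. -/
def hasDistance {n : ℕ} (C : Set (Fin n → Bool)) (δ : ℝ) : Prop :=
  ∀ x ∈ C, ∀ y ∈ C, x ≠ y → δ ≤ relDist x y

/-- `E` is a `(τ,ε)`-test-hypergraph for `C`: all codewords satisfy all hyperedges, and every
word at relative distance at least `τ` from `C` falsifies at least an `ε` fraction of them. -/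
def IsTestHypergraph {n : ℕ} (C : Set (Fin n → Bool)) (E : Finset (Edge n)) (τ ε : ℝ) : Prop :=
  (∀ x ∈ C, ∀ e ∈ E, sat x e) ∧
  (∀ x : Fin n → Bool, farFrom C x τ →
    ε * E.card ≤ ((E.filter fun e => ¬ sat x e).card : ℝ))

/-- A constraint is LOF ("last-one-fixed") if any two accepted assignments agreeing on all but
one coordinate agree on that coordinate as well. -/
def LOF {n : ℕ} (e : Edge n) : Prop :=
  ∀ a b : {v // v ∈ e.1} → Bool, e.2 a = true → e.2 b = true →
    ∀ u : {v // v ∈ e.1}, (∀ v : {v // v ∈ e.1}, v ≠ u → a v = b v) → a u = b u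


/-- **Lemma (few low-degree vertices).** For a `(δ/2, ε)`-test-hypergraph of a code of relative
distance at least `δ`, fewer than `δn/2` coordinates are contained in fewer than `2ε|E|/(δn)`
hyperedges. -/
theorem few_low_degree_vertices {n q : ℕ} (δ ε : ℝ)
    (hδ : 0 < δ) (hδ1 : δ ≤ 1) (hε : 0 < ε) (hn : 1 ≤ n) (hq : 2 ≤ q)
    (hint : ∃ k : ℕ, 0 < k ∧ (k : ℝ) = δ * n / 2)
    (C : Set (Fin n → Bool)) (hC : C.Nonempty)
    (E : Finset (Edge n)) (hE : E.Nonempty)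
    (hsize : ∀ e ∈ E, e.1.card ≤ q)
    (hdist : hasDistance C δ)
    (htest : IsTestHypergraph C E (δ / 2) ε) :
    (({v : Fin n |
        ((E.filter fun e => v ∈ e.1).card : ℝ) < 2 * ε * E.card / (δ * n)}.ncard : ℝ))
      < δ * n / 2 := by
  classical
  by_contra hcon
  push_neg at hcon
  obtain ⟨k, hk0, hk⟩ := hint
  have hn0 : (0:ℝ) < n := by exact_mod_cast hn
  -- low-degree vertices as a Finset
  set T : Finset (Fin n) := Finset.univ.filter
    (fun v => ((E.filter fun e => v ∈ e.1).card : ℝ) < 2 * ε * E.card / (δ * n)) with hT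
  have hTcard : ({v : Fin n |
      ((E.filter fun e => v ∈ e.1).card : ℝ) < 2 * ε * E.card / (δ * n)}.ncard) = T.card := by
    rw [hT]
    rw [Set.ncard_eq_toFinset_card']
    congr 1
    ext v
    simp [Set.mem_toFinset]
  have hkT : k ≤ T.card := by
    have : (k:ℝ) ≤ T.card := by rw [hk, ← hTcard]; exact hcon
    exact_mod_cast this
  obtain ⟨S, hST, hScard⟩ := Finset.exists_subset_card_eq hkT
  obtain ⟨y, hy⟩ := hC
  set x : Fin n → Bool := fun v => if v ∈ S then !(y v) else y v with hx
  have hdiff : (Finset.univ.filter fun i => x i ≠ y i) = S := by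
    ext i
    by_cases hi : i ∈ S <;> simp [hx, hi]
  have hham : hammingDist x y = k := by
    rw [hammingDist, ← hScard, ← hdiff]
  have hrel : relDist x y = δ / 2 := by
    rw [relDist, hham, hk]
    field_simp
  -- x is δ/2-far from C
  have hfar : farFrom C x (δ / 2) := by
    intro y' hy'
    by_cases hyy : y' = y
    · rw [hyy, hrel]
    · have htri : (hammingDist y y' : ℝ) ≤ hammingDist y x + hammingDist x y' := by
        exact_mod_cast hammingDist_triangle y x y'
      have hd : δ ≤ relDist y y' := hdist y hy y' hy' (fun h => hyy h.symm)
      have hyx : (hammingDist y x : ℝ) = k := by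
        rw [hammingDist_comm]; exact_mod_cast hham
      rw [relDist] at hd
      have hd' : δ * n ≤ (hammingDist y y' : ℝ) := (le_div_iff₀ hn0).mp hd
      rw [hyx, hk] at htri
      rw [relDist, le_div_iff₀ hn0]
      linarith
  obtain ⟨hall, htest2⟩ := htest
  have hF := htest2 x hfar
  set F := E.filter fun e => ¬ sat x e with hFdef
  -- every falsified edge meets S
  have hmeet : ∀ e ∈ F, ∃ v ∈ S, v ∈ e.1 := by
    intro e he
    rw [hFdef, Finset.mem_filter] at he
    obtain ⟨heE, hns⟩ := he
    by_contra hno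
    push_neg at hno
    apply hns
    have : (fun v : {v // v ∈ e.1} => x v.1) = (fun v => y v.1) := by
      funext v
      have : v.1 ∉ S := fun h => hno v.1 h v.2
      simp [hx, this]
    rw [sat, this]
    exact hall y hy e heE
  have hsub : F ⊆ S.biUnion (fun v => E.filter fun e => v ∈ e.1) := by
    intro e he
    obtain ⟨v, hvS, hve⟩ := hmeet e he
    rw [Finset.mem_biUnion]
    refine ⟨v, hvS, ?_⟩
    rw [Finset.mem_filter]
    exact ⟨(Finset.mem_filter.mp he).1, hve⟩
  have hcard1 : (F.card : ℝ) ≤ ∑ v ∈ S, ((E.filter fun e => v ∈ e.1).card : ℝ) := by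
    have h1 : F.card ≤ (S.biUnion (fun v => E.filter fun e => v ∈ e.1)).card :=
      Finset.card_le_card hsub
    have h2 : (S.biUnion (fun v => E.filter fun e => v ∈ e.1)).card ≤
        ∑ v ∈ S, (E.filter fun e => v ∈ e.1).card := Finset.card_biUnion_le
    exact_mod_cast le_trans h1 h2
  have hSne : S.Nonempty := Finset.card_pos.mp (hScard ▸ hk0)
  have hcard2 : ∑ v ∈ S, ((E.filter fun e => v ∈ e.1).card : ℝ) <
      ∑ _v ∈ S, (2 * ε * E.card / (δ * n)) := by
    apply Finset.sum_lt_sum_of_nonempty hSne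
    intro v hv
    have := hST hv
    rw [hT, Finset.mem_filter] at this
    exact this.2
  have heval : ∑ _v ∈ S, (2 * ε * E.card / (δ * n)) = ε * E.card := by
    rw [Finset.sum_const, hScard, nsmul_eq_mul, hk]
    have hδn : δ * n ≠ 0 := by positivity
    field_simp
  have : ε * E.card < ε * E.card := by
    calc ε * E.card ≤ (F.card : ℝ) := hF
      _ < ε * E.card := by rw [← heval]; exact lt_of_le_of_lt hcard1 hcard2
  exact absurd this (lt_irrefl _)

end LTCPaper
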